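/- Each of the following holds: (i) G is generated by G(0) together with x_∅, and x_∅ G(0) x_∅^{-1} is a proper subgroup of G(0), so G is a strictly ascending HNN extension of G(0) with stable element x_∅^{-1}; (ii) G_y is generated by G_y(1) together with x_∅, and x_∅^{-1} G_y(1) x_∅ is a proper subgroup of G_y(1), so G_y is a strictly ascending HNN extension of G_y(1) with stable element x_∅; (iii) yG is generated by yG(0) together with x_∅, and x_∅ yG(0) x_∅^{-1} is a proper subgroup of yG(0), so yG is a strictly ascending HNN extension of yG(0) with stable element x_∅^{-1}. -/

import Mathlib

namespace LodhaMoore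

/-- Infinite binary sequences `2^ℕ`. -/
abbrev Seq : Type := ℕ → Bool

/-- The underlying function of the basic bijection `x`:
`00η ↦ 0η`, `01η ↦ 10η`, `1η ↦ 11η` (reading `false` as `0` and `true` as `1`). -/
def xFun (ξ : Seq) : Seq := fun n =>
  if ξ 0 then
    match n with
    | 0 => true
    | 1 => true
    | n+2 => ξ (n+1)
  else if ξ 1 then
    match n with
    | 0 => true
    | 1 => false
    | n+2 => ξ (n+2)
  else
    match n with
    | 0 => false
    | n+1 => ξ (n+2)

/-- The inverse of `xFun`: `0η ↦ 00η`, `10η ↦ 01η`, `11η ↦ 1η`. -/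
def xInv (ξ : Seq) : Seq := fun n =>
  if ξ 0 then
    if ξ 1 then
      match n with
      | 0 => true
      | n+1 => ξ (n+2)
    else
      match n with
      | 0 => false
      | 1 => true
      | n+2 => ξ (n+2)
  else
    match n with
    | 0 => false
    | 1 => false
    | n+2 => ξ (n+1)

/-- `yAux true n ξ` is the `n`-th bit of `ξ.y`, and `yAux false n ξ` is the `n`-th bit of
`ξ.y⁻¹`, where `y` is defined by `00η ↦ 0(η.y)`, `01η ↦ 10(η.y⁻¹)`, `1η ↦ 11(η.y)`,
so `y⁻¹` is given by `0η ↦ 00(η.y⁻¹)`, `10η ↦ 01(η.y)`, `11η ↦ 1(η.y⁻¹)`. -/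
def yAux : Bool → ℕ → Seq → Bool
  | true, 0, ξ => if ξ 0 then true else if ξ 1 then true else false
  | true, 1, ξ => if ξ 0 then true else if ξ 1 then false
      else yAux true 0 (fun k => ξ (k+2))
  | true, n+2, ξ =>
      if ξ 0 then yAux true n (fun k => ξ (k+1))
      else if ξ 1 then yAux false n (fun k => ξ (k+2))
      else yAux true (n+1) (fun k => ξ (k+2))
  | false, 0, ξ => if ξ 0 then (if ξ 1 then true else false) else false
  | false, 1, ξ => if ξ 0 then (if ξ 1 then yAux false 0 (fun k => ξ (k+2)) else true)
      else false
  | false, n+2, ξ =>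
      if ξ 0 then
        (if ξ 1 then yAux false (n+1) (fun k => ξ (k+2))
         else yAux true n (fun k => ξ (k+2)))
      else yAux false n (fun k => ξ (k+1))

lemma yAux_inv (n : ℕ) :
    ∀ ξ : Seq, (yAux false n (fun k => yAux true k ξ) = ξ n) ∧
      (yAux true n (fun k => yAux false k ξ) = ξ n) := by
  induction n using Nat.strong_induction_on with
  | _ n IH =>
    intro ξ
    constructor
    · cases h0 : ξ 0 <;> cases h1 : ξ 1 <;> rcases n with _ | _ | n <;>
        simp [yAux, h0, h1]
      · have e : (fun k => yAux true (k+1) ξ) = fun k => yAux true k (fun j => ξ (j+2)) :=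
          funext fun k => by cases k <;> simp [yAux, h0, h1]
        rw [e]; exact (IH n (by omega) _).1
      · exact (IH n (by omega) _).2
      · intro h2 h3; simp_all
      · exact (IH (n+1) (by omega) _).1
      · exact (IH (n+1) (by omega) _).1
    · cases h0 : ξ 0 <;> cases h1 : ξ 1 <;> rcases n with _ | _ | n <;>
        simp [yAux, h0, h1]
      · exact (IH (n+1) (by omega) _).2
      · cases h2 : ξ 2 <;> simp [h2]
      · exact (IH (n+1) (by omega) _).2
      · exact (IH n (by omega) _).1
      · have e : (fun k => yAux false (k+1) ξ) = fun k => yAux false k (fun j => ξ (j+2)) :=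
          funext fun k => by cases k <;> simp [yAux, h0, h1]
        rw [e]; exact (IH n (by omega) _).2

/-- The basic bijection `x` of `2^ℕ`. -/
def xPerm : Equiv.Perm Seq where
  toFun := xFun
  invFun := xInv
  left_inv := by
    intro ξ
    funext n
    cases h0 : ξ 0 <;> cases h1 : ξ 1 <;>
      rcases n with _ | _ | n <;>
      simp [xFun, xInv, h0, h1]
  right_inv := by
    intro ξ
    funext n
    cases h0 : ξ 0 <;> cases h1 : ξ 1 <;>
      rcases n with _ | _ | n <;>
      simp [xFun, xInv, h0, h1]

/-- The basic bijection `y` of `2^ℕ`. -/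
def yPerm : Equiv.Perm Seq where
  toFun ξ := fun n => yAux true n ξ
  invFun ξ := fun n => yAux false n ξ
  left_inv ξ := funext fun n => (yAux_inv n ξ).1
  right_inv ξ := funext fun n => (yAux_inv n ξ).2

/-- Prepend a finite word to an infinite sequence. -/
def append (s : List Bool) (ξ : Seq) : Seq := fun n =>
  if h : n < s.length then s.get ⟨n, h⟩ else ξ (n - s.length)

/-- Drop the first `k` letters of an infinite sequence. -/
def dropN (k : ℕ) (ξ : Seq) : Seq := fun n => ξ (n + k)

/-- `hasPrefix s ξ` iff the finite word `s` is a prefix of `ξ`. -/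
def hasPrefix (s : List Bool) (ξ : Seq) : Prop := ∀ i : Fin s.length, ξ i = s.get i

instance (s : List Bool) (ξ : Seq) : Decidable (hasPrefix s ξ) := by
  unfold hasPrefix; infer_instance

lemma hasPrefix_append (s : List Bool) (ξ : Seq) : hasPrefix s (append s ξ) := by
  intro i
  simp [append, i.isLt]

lemma dropN_append (s : List Bool) (ξ : Seq) : dropN s.length (append s ξ) = ξ := by
  funext n
  simp [dropN, append, Nat.not_lt.2 (Nat.le_add_left _ _)]

lemma append_dropN {s : List Bool} {ξ : Seq} (h : hasPrefix s ξ) :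
    append s (dropN s.length ξ) = ξ := by
  funext n
  by_cases h' : n < s.length
  · simpa [append, h'] using (h ⟨n, h'⟩).symm
  · simp [append, h', dropN, Nat.sub_add_cancel (Nat.le_of_not_lt h')]

/-- The bijection of `2^ℕ` acting as the bijection `f` "at the address `s`":
`sη ↦ s(η.f)`, and `ξ ↦ ξ` if `s` is not a prefix of `ξ`. -/
def localize (s : List Bool) (f : Equiv.Perm Seq) : Equiv.Perm Seq where
  toFun ξ := if hasPrefix s ξ then append s (f (dropN s.length ξ)) else ξ
  invFun ξ := if hasPrefix s ξ then append s (f.symm (dropN s.length ξ)) else ξ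
  left_inv := by
    intro ξ
    by_cases h : hasPrefix s ξ
    · simp [h, hasPrefix_append, dropN_append, append_dropN h]
    · simp [h]
  right_inv := by
    intro ξ
    by_cases h : hasPrefix s ξ
    · simp [h, hasPrefix_append, dropN_append, append_dropN h]
    · simp [h]

/-- The group of bijections of `2^ℕ`.  Composition is written so that in a product `g * h`
the factor `g` acts first: bijections act on the right, as in Lodha--Moore's paper. -/
abbrev M : Type := (Equiv.Perm Seq)ᵐᵒᵖ

/-- The generator `x_s`, `s ∈ 2^{<ℕ}` (a finite binary sequence, i.e. a `List Bool`). -/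
def px (s : List Bool) : M := MulOpposite.op (localize s xPerm)

/-- The generator `y_s`, `s ∈ 2^{<ℕ}`. -/
def py (s : List Bool) : M := MulOpposite.op (localize s yPerm)

/-- `t` is a word of the form `0^n`, `n ≥ 0`. -/
def allFalse (t : List Bool) : Prop := ∀ b ∈ t, b = false

/-- `t` is a word of the form `1^n`, `n ≥ 0`. -/
def allTrue (t : List Bool) : Prop := ∀ b ∈ t, b = true

instance (t : List Bool) : Decidable (allFalse t) := by unfold allFalse; infer_instance
instance (t : List Bool) : Decidable (allTrue t) := by unfold allTrue; infer_instance

/-- Addresses allowed for the `y`-generators of the Lodha–Moore group `G`. -/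
def gSet : Set (List Bool) := {t | ¬ allFalse t ∧ ¬ allTrue t}
/-- Addresses allowed for the `y`-generators of the Lodha–Moore group `G_y`. -/
def gySet : Set (List Bool) := {t | ¬ allFalse t}
/-- Addresses allowed for the `y`-generators of the Lodha–Moore group `yG`. -/
def ygSet : Set (List Bool) := {t | ¬ allTrue t}
/-- Addresses allowed for the `y`-generators of the Lodha–Moore group `yGy`. -/
def ygySet : Set (List Bool) := Set.univ

/-- The Lodha–Moore style group with `y`-generators allowed at the addresses in `A`. -/
def LM (A : Set (List Bool)) : Subgroup M :=
  Subgroup.closure (Set.range px ∪ py '' A)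

/-- The Lodha–Moore group `G`. -/
def G : Subgroup M := LM gSet
/-- The Lodha–Moore group `G_y`. -/
def Gy : Subgroup M := LM gySet
/-- The Lodha–Moore group `yG`. -/
def yG : Subgroup M := LM ygSet
/-- The Lodha–Moore group `yGy`. -/
def yGy : Subgroup M := LM ygySet

/-- The semi-deferred subgroup `H(s)` of the Lodha–Moore group `H = LM A`: the subgroup
generated by those generators of `H` whose address has `s` as a prefix. -/
def LMdef (A : Set (List Bool)) (s : List Bool) : Subgroup M :=
  Subgroup.closure ((px '' {t | s <+: t}) ∪ (py '' {t | t ∈ A ∧ s <+: t}))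

lemma px_mem (A : Set (List Bool)) (s : List Bool) : px s ∈ LM A :=
  Subgroup.subset_closure (Or.inl ⟨s, rfl⟩)

lemma py_mem {A : Set (List Bool)} {s : List Bool} (h : s ∈ A) : py s ∈ LM A :=
  Subgroup.subset_closure (Or.inr ⟨s, h, rfl⟩)

lemma px_mem_def (A : Set (List Bool)) {s t : List Bool} (h : s <+: t) :
    px t ∈ LMdef A s :=
  Subgroup.subset_closure (Or.inl ⟨t, h, rfl⟩)

lemma py_mem_def {A : Set (List Bool)} {s t : List Bool} (h1 : t ∈ A) (h2 : s <+: t) :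
    py t ∈ LMdef A s :=
  Subgroup.subset_closure (Or.inr ⟨t, ⟨h1, h2⟩, rfl⟩)

/-- The conjugate subgroup `z B z⁻¹`. -/
def conjSubgroup {H : Type*} [Group H] (z : H) (B : Subgroup H) : Subgroup H :=
  B.map (MulAut.conj z).toMonoidHom

/-- The `MulEquiv` `φ.range ≃* ⊤` used to define an ascending HNN extension. -/
noncomputable def ascEquiv {B : Type*} [Group B] (φ : B →* B) (hφ : Function.Injective φ) :
    (φ.range : Subgroup B) ≃* (⊤ : Subgroup B) :=
  (MonoidHom.ofInjective hφ).symm.trans Subgroup.topEquiv.symm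

/-- The ascending HNN extension `B*_{φ,t} = ⟨B, t ∣ t⁻¹ b t = φ(b) for all b ∈ B⟩` of the
group `B` along the injective endomorphism `φ`.  (In `HNNExtension B φ.range ⊤ (ascEquiv φ hφ)`
the defining relation is exactly `t⁻¹ * of b * t = of (φ b)` for all `b : B`.) -/
noncomputable abbrev AscHNN {B : Type*} [Group B] (φ : B →* B)
    (hφ : Function.Injective φ) : Type _ :=
  HNNExtension B φ.range ⊤ (ascEquiv φ hφ)


section Aux

open MulOpposite

/-! ### Basic sequence lemmas -/

/-- Prepend one bit. -/
def bcons (b : Bool) (ξ : Seq) : Seq := fun n => match n with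
  | 0 => b
  | n+1 => ξ n

@[simp] lemma bcons_zero (b : Bool) (ξ : Seq) : bcons b ξ 0 = b := rfl
@[simp] lemma bcons_succ (b : Bool) (ξ : Seq) (n : ℕ) : bcons b ξ (n+1) = ξ n := rfl

lemma append_nil (ξ : Seq) : append [] ξ = ξ := by
  funext n; simp [append]

lemma append_cons (b : Bool) (l : List Bool) (ξ : Seq) :
    append (b :: l) ξ = bcons b (append l ξ) := by
  funext n
  rcases n with _ | n
  · simp [append]
  · simp only [bcons_succ]
    by_cases h : n < l.length
    · simp [append, h, Nat.succ_lt_succ h]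
    · have h' : ¬ (n + 1 < (b :: l).length) := by simp; omega
      simp [append, h, h', Nat.succ_sub_succ]

lemma hasPrefix_nil (ξ : Seq) : hasPrefix [] ξ := fun i => i.elim0

lemma dropN_zero (ξ : Seq) : dropN 0 ξ = ξ := by funext n; simp [dropN]

lemma dropN_one_bcons (b : Bool) (ξ : Seq) : dropN 1 (bcons b ξ) = ξ := by
  funext n; simp [dropN]

lemma bcons_eta (ξ : Seq) : bcons (ξ 0) (dropN 1 ξ) = ξ := by
  funext n; rcases n with _ | n <;> simp [dropN]

lemma hasPrefix_cons_head {b : Bool} {l : List Bool} {ξ : Seq} (h : hasPrefix (b :: l) ξ) :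
    ξ 0 = b := h ⟨0, by simp⟩

/-! ### `xFun` computation lemmas -/

lemma xFun_ff (ξ : Seq) : xFun (bcons false (bcons false ξ)) = bcons false ξ := by
  funext n; rcases n with _ | n <;> simp [xFun]

lemma xFun_ft (ξ : Seq) : xFun (bcons false (bcons true ξ)) = bcons true (bcons false ξ) := by
  funext n; rcases n with _ | _ | n <;> simp [xFun]

lemma xFun_t (ξ : Seq) : xFun (bcons true ξ) = bcons true (bcons true ξ) := by
  funext n; rcases n with _ | _ | n <;> simp [xFun]

lemma xPerm_apply (ξ : Seq) : xPerm ξ = xFun ξ := rfl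

/-! ### `localize` lemmas -/

lemma localize_append (s : List Bool) (f : Equiv.Perm Seq) (ξ : Seq) :
    localize s f (append s ξ) = append s (f ξ) := by
  simp [localize, hasPrefix_append, dropN_append]

lemma localize_not_prefix (s : List Bool) (f : Equiv.Perm Seq) {ξ : Seq}
    (h : ¬ hasPrefix s ξ) : localize s f ξ = ξ := by
  simp [localize, h]

lemma localize_nil (f : Equiv.Perm Seq) : localize [] f = f := by
  refine Equiv.ext fun ξ => ?_
  have : localize [] f (append [] ξ) = append [] (f ξ) := localize_append [] f ξ
  simpa [append_nil] using this

lemma px_nil : px [] = op xPerm := by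
  rw [px, localize_nil]

lemma localize_single (b : Bool) (f : Equiv.Perm Seq) (ξ : Seq) :
    localize [b] f (bcons b ξ) = bcons b (f ξ) := by
  have := localize_append [b] f ξ
  simpa [append_cons, append_nil] using this

lemma localize_single_ne (b : Bool) (f : Equiv.Perm Seq) {ξ : Seq} (h : ξ 0 ≠ b) :
    localize [b] f ξ = ξ :=
  localize_not_prefix _ _ (fun hp => h (hasPrefix_cons_head hp))

end Aux
section Aux2

open MulOpposite

/-! ### Conjugation of localized permutations -/

lemma conj_localize {u v : List Bool} {Q : Equiv.Perm Seq}
    (h : ∀ ξ : Seq, Q (append u ξ) = append v ξ) (f : Equiv.Perm Seq) :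
    Q * localize u f * Q⁻¹ = localize v f := by
  refine Equiv.ext fun ξ => ?_
  by_cases hv : hasPrefix v ξ
  · have hξ : append v (dropN v.length ξ) = ξ := append_dropN hv
    set η := dropN v.length ξ with hη
    have hQ : Q⁻¹ ξ = append u η := by
      rw [← hξ, ← h η]; simp
    simp only [Equiv.Perm.mul_apply, hQ, localize_append]
    rw [h, ← hξ]
    simp [localize_append]
  · have hu : ¬ hasPrefix u (Q⁻¹ ξ) := by
      intro hc
      apply hv
      have : Q (Q⁻¹ ξ) = ξ := by simp
      rw [← this, ← append_dropN hc, h]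
      exact hasPrefix_append _ _
    simp only [Equiv.Perm.mul_apply, localize_not_prefix _ _ hu, localize_not_prefix _ _ hv]
    simp

/-- Master conjugation relation in `M`. -/
lemma conj_op {u v : List Bool} (h : ∀ ξ : Seq, xPerm (append u ξ) = append v ξ)
    (f : Equiv.Perm Seq) :
    op (localize v f) = (px [])⁻¹ * op (localize u f) * px [] := by
  have := conj_localize h f
  rw [← this]
  simp [px_nil, mul_assoc]

lemma xPerm_ff (ξ : Seq) : xPerm (bcons false (bcons false ξ)) = bcons false ξ :=
  xFun_ff ξ

lemma xPerm_ft (ξ : Seq) :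
    xPerm (bcons false (bcons true ξ)) = bcons true (bcons false ξ) := xFun_ft ξ

lemma xPerm_t (ξ : Seq) : xPerm (bcons true ξ) = bcons true (bcons true ξ) := xFun_t ξ

lemma localize_bcons_eq (b : Bool) (f : Equiv.Perm Seq) (ξ : Seq) :
    localize [b] f (bcons b ξ) = bcons b (f ξ) := localize_single b f ξ

lemma localize_tf (f : Equiv.Perm Seq) (ξ : Seq) :
    localize [true] f (bcons false ξ) = bcons false ξ :=
  localize_single_ne true f (by simp)

lemma localize_ft (f : Equiv.Perm Seq) (ξ : Seq) :
    localize [false] f (bcons true ξ) = bcons true ξ :=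
  localize_single_ne false f (by simp)

lemma hyp_A1 (s : List Bool) (ξ : Seq) :
    xPerm (append (false :: false :: s) ξ) = append (false :: s) ξ := by
  simp only [append_cons, xPerm_ff]

lemma hyp_A2 (s : List Bool) (ξ : Seq) :
    xPerm (append (false :: true :: s) ξ) = append (true :: false :: s) ξ := by
  simp only [append_cons, xPerm_ft]

lemma hyp_A3 (s : List Bool) (ξ : Seq) :
    xPerm (append (true :: s) ξ) = append (true :: true :: s) ξ := by
  simp only [append_cons, xPerm_t]

/-- `g_{0s} = x⁻¹ g_{00s} x`. -/
lemma relA1 (f : Equiv.Perm Seq) (s : List Bool) :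
    op (localize (false :: s) f) =
      (px [])⁻¹ * op (localize (false :: false :: s) f) * px [] :=
  conj_op (hyp_A1 s) f

/-- `g_{10s} = x⁻¹ g_{01s} x`. -/
lemma relA2 (f : Equiv.Perm Seq) (s : List Bool) :
    op (localize (true :: false :: s) f) =
      (px [])⁻¹ * op (localize (false :: true :: s) f) * px [] :=
  conj_op (hyp_A2 s) f

/-- `g_{11s} = x⁻¹ g_{1s} x`. -/
lemma relA3 (f : Equiv.Perm Seq) (s : List Bool) :
    op (localize (true :: true :: s) f) =
      (px [])⁻¹ * op (localize (true :: s) f) * px [] :=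
  conj_op (hyp_A3 s) f

/-! ### The special identity `x_{[0]} ⋅ x_∅ ⋅ x_{[1]} = x_∅ ⋅ x_∅` -/

lemma special_perm :
    localize [true] xPerm * xPerm * localize [false] xPerm = xPerm * xPerm := by
  refine Equiv.ext fun ξ => ?_
  simp only [Equiv.Perm.mul_apply]
  rcases h0 : ξ 0 with _ | _
  · -- ξ = 0 ...
    rcases h1 : ξ 1 with _ | _
    · -- ξ = 00 ...
      set ρ := dropN 2 ξ with hρ
      have hξ : ξ = bcons false (bcons false (bcons (ξ 2) (dropN 1 ρ))) := by
        have e1 : bcons (ρ 0) (dropN 1 ρ) = ρ := bcons_eta ρ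
        have e2 : ρ 0 = ξ 2 := by simp [hρ, dropN]
        rw [e2] at e1
        have hd : dropN 1 ξ = bcons false ρ := by
          funext n; rcases n with _ | n <;> simp [dropN, hρ, h1]
        calc ξ = bcons (ξ 0) (dropN 1 ξ) := (bcons_eta ξ).symm
          _ = bcons false (bcons false ρ) := by rw [h0, hd]
          _ = _ := by rw [e1]
      rcases h2 : ξ 2 with _ | _ <;> rw [hξ, h2] <;>
        simp [xPerm_ff, xPerm_ft, xPerm_t, localize_bcons_eq, localize_tf, localize_ft]
    · -- ξ = 01 ...
      have hξ : ξ = bcons false (bcons true (dropN 2 ξ)) := by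
        have hd : dropN 1 ξ = bcons true (dropN 2 ξ) := by
          funext n; rcases n with _ | n <;> simp [dropN, h1]
        calc ξ = bcons (ξ 0) (dropN 1 ξ) := (bcons_eta ξ).symm
          _ = _ := by rw [h0, hd]
      rw [hξ]
      simp [xPerm_ff, xPerm_ft, xPerm_t, localize_bcons_eq, localize_tf, localize_ft]
  · -- ξ = 1 ...
    have hξ : ξ = bcons true (dropN 1 ξ) := by
      rw [← h0]; exact (bcons_eta ξ).symm
    rw [hξ]
    simp [xPerm_ff, xPerm_ft, xPerm_t, localize_bcons_eq, localize_tf, localize_ft]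

/-- In `M`: `x_{[0]} * x_∅ * x_{[1]} = x_∅ * x_∅`. -/
lemma special_M : px [false] * px [] * px [true] = px [] * px [] := by
  have h := congrArg op special_perm
  simpa [px, px_nil, localize_nil, op_mul, mul_assoc] using h

lemma px_true_eq : px [true] = (px [])⁻¹ * (px [false])⁻¹ * px [] * px [] :=
  calc px [true] = (px [])⁻¹ * (px [false])⁻¹ * (px [false] * px [] * px [true]) := by group
    _ = (px [])⁻¹ * (px [false])⁻¹ * (px [] * px []) := by rw [special_M]
    _ = (px [])⁻¹ * (px [false])⁻¹ * px [] * px [] := by group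

lemma px_false_eq : px [false] = px [] * px [] * (px [true])⁻¹ * (px [])⁻¹ :=
  calc px [false] = px [false] * px [] * px [true] * (px [true])⁻¹ * (px [])⁻¹ := by group
    _ = px [] * px [] * (px [true])⁻¹ * (px [])⁻¹ := by rw [special_M]

end Aux2
section Aux3

open MulOpposite Subgroup

lemma px_eq (t : List Bool) : px t = op (localize t xPerm) := rfl
lemma py_eq (t : List Bool) : py t = op (localize t yPerm) := rfl

lemma relB1 (f : Equiv.Perm Seq) (s : List Bool) :
    op (localize (false :: false :: s) f) =
      px [] * op (localize (false :: s) f) * (px [])⁻¹ := by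
  rw [relA1 f s]; group

lemma relB2 (f : Equiv.Perm Seq) (s : List Bool) :
    op (localize (false :: true :: s) f) =
      px [] * op (localize (true :: false :: s) f) * (px [])⁻¹ := by
  rw [relA2 f s]; group

lemma LMdef_le_LM (A : Set (List Bool)) (s : List Bool) : LMdef A s ≤ LM A := by
  rw [LMdef]
  refine (Subgroup.closure_le _).2 ?_
  rintro g (⟨t, _, rfl⟩ | ⟨t, ⟨ht, _⟩, rfl⟩)
  · exact px_mem A t
  · exact py_mem ht

section Gen

variable (A : Set (List Bool))

/-- The subgroup generated by the semi-deferred subgroup at `[c]` together with `x_∅`. -/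
def genH (c : Bool) : Subgroup M :=
  Subgroup.closure ((LMdef A [c] : Set M) ∪ {px []})

lemma px_nil_mem_genH (c : Bool) : px [] ∈ genH A c :=
  Subgroup.subset_closure (Or.inr rfl)

lemma LMdef_le_genH (c : Bool) : LMdef A [c] ≤ genH A c :=
  fun _ hg => Subgroup.subset_closure (Or.inl hg)

lemma genx_false : ∀ t : List Bool, px t ∈ genH A false := by
  intro t
  induction t with
  | nil => exact px_nil_mem_genH A false
  | cons b s IH =>
    cases b
    · exact LMdef_le_genH A false (px_mem_def A ⟨s, rfl⟩)
    · cases s with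
      | nil =>
        rw [px_true_eq]
        exact mul_mem (mul_mem (mul_mem (inv_mem (px_nil_mem_genH A false))
          (inv_mem (LMdef_le_genH A false (px_mem_def A ⟨[], rfl⟩))))
          (px_nil_mem_genH A false)) (px_nil_mem_genH A false)
      | cons b' s' =>
        cases b'
        · rw [px_eq, relA2 xPerm s']
          exact mul_mem (mul_mem (inv_mem (px_nil_mem_genH A false))
            (LMdef_le_genH A false (px_mem_def A ⟨true :: s', rfl⟩)))
            (px_nil_mem_genH A false)
        · rw [px_eq, relA3 xPerm s']
          exact mul_mem (mul_mem (inv_mem (px_nil_mem_genH A false)) IH)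
            (px_nil_mem_genH A false)

lemma geny_false (h01 : ∀ s, (false :: true :: s) ∈ A)
    (h11 : ∀ s, (true :: true :: s) ∈ A → (true :: s) ∈ A)
    (hnil : [] ∉ A) (ht : [true] ∉ A) :
    ∀ t ∈ A, py t ∈ genH A false := by
  intro t
  induction t with
  | nil => exact fun h => absurd h hnil
  | cons b s IH =>
    cases b
    · exact fun h => LMdef_le_genH A false (py_mem_def h ⟨s, rfl⟩)
    · cases s with
      | nil => exact fun h => absurd h ht
      | cons b' s' =>
        cases b'
        · intro _
          rw [py_eq, relA2 yPerm s']
          exact mul_mem (mul_mem (inv_mem (px_nil_mem_genH A false))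
            (LMdef_le_genH A false (py_mem_def (h01 s') ⟨true :: s', rfl⟩)))
            (px_nil_mem_genH A false)
        · intro h
          rw [py_eq, relA3 yPerm s']
          exact mul_mem (mul_mem (inv_mem (px_nil_mem_genH A false)) (IH (h11 s' h)))
            (px_nil_mem_genH A false)

lemma genx_true : ∀ t : List Bool, px t ∈ genH A true := by
  intro t
  induction t with
  | nil => exact px_nil_mem_genH A true
  | cons b s IH =>
    cases b
    · cases s with
      | nil =>
        rw [px_false_eq]
        exact mul_mem (mul_mem (mul_mem (px_nil_mem_genH A true) (px_nil_mem_genH A true))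
          (inv_mem (LMdef_le_genH A true (px_mem_def A ⟨[], rfl⟩))))
          (inv_mem (px_nil_mem_genH A true))
      | cons b' s' =>
        cases b'
        · rw [px_eq, relB1 xPerm s']
          exact mul_mem (mul_mem (px_nil_mem_genH A true) IH)
            (inv_mem (px_nil_mem_genH A true))
        · rw [px_eq, relB2 xPerm s']
          exact mul_mem (mul_mem (px_nil_mem_genH A true)
            (LMdef_le_genH A true (px_mem_def A ⟨false :: s', rfl⟩)))
            (inv_mem (px_nil_mem_genH A true))
    · exact LMdef_le_genH A true (px_mem_def A ⟨s, rfl⟩)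

lemma geny_true (h10 : ∀ s, (true :: false :: s) ∈ A)
    (h00 : ∀ s, (false :: false :: s) ∈ A → (false :: s) ∈ A)
    (hnil : [] ∉ A) (hf : [false] ∉ A) :
    ∀ t ∈ A, py t ∈ genH A true := by
  intro t
  induction t with
  | nil => exact fun h => absurd h hnil
  | cons b s IH =>
    cases b
    · cases s with
      | nil => exact fun h => absurd h hf
      | cons b' s' =>
        cases b'
        · intro h
          rw [py_eq, relB1 yPerm s']
          exact mul_mem (mul_mem (px_nil_mem_genH A true) (IH (h00 s' h)))
            (inv_mem (px_nil_mem_genH A true))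
        · intro _
          rw [py_eq, relB2 yPerm s']
          exact mul_mem (mul_mem (px_nil_mem_genH A true)
            (LMdef_le_genH A true (py_mem_def (h10 s') ⟨false :: s', rfl⟩)))
            (inv_mem (px_nil_mem_genH A true))
    · exact fun h => LMdef_le_genH A true (py_mem_def h ⟨s, rfl⟩)

lemma genH_eq (c : Bool) (hx : ∀ t, px t ∈ genH A c) (hy : ∀ t ∈ A, py t ∈ genH A c) :
    genH A c = LM A := by
  refine le_antisymm ?_ ?_
  · refine (Subgroup.closure_le _).2 ?_
    rintro g (hg | rfl)
    · exact LMdef_le_LM A [c] hg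
    · exact px_mem A []
  · refine (Subgroup.closure_le _).2 ?_
    rintro g (⟨t, rfl⟩ | ⟨t, ht, rfl⟩)
    · exact hx t
    · exact hy t ht

end Gen
end Aux3
section Aux4

open MulOpposite Subgroup

lemma gen_G : genH gSet false = G := by
  refine genH_eq gSet false (genx_false gSet) (geny_false gSet ?_ ?_ ?_ ?_)
  · intro s
    constructor
    · intro h; exact absurd (h true (by simp)) (by simp)
    · intro h; exact absurd (h false (by simp)) (by simp)
  · rintro s ⟨h1, h2⟩
    refine ⟨fun h => absurd (h true (by simp)) (by simp), fun h => h2 ?_⟩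
    intro b hb
    rcases List.mem_cons.1 hb with rfl | hb
    · rfl
    · exact h b (by simp [hb])
  · rintro ⟨-, h2⟩; exact h2 (by intro b hb; simp at hb)
  · rintro ⟨-, h2⟩; exact h2 (by intro b hb; simp at hb; exact hb)

lemma gen_yG : genH ygSet false = yG := by
  refine genH_eq ygSet false (genx_false ygSet) (geny_false ygSet ?_ ?_ ?_ ?_)
  · intro s h; exact absurd (h false (by simp)) (by simp)
  · intro s h1 h
    exact h1 (by intro b hb; rcases List.mem_cons.1 hb with rfl | hb; · rfl
                 · exact h b (by simp [hb]))
  · intro h2; exact h2 (by intro b hb; simp at hb)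
  · intro h2; exact h2 (by intro b hb; simp at hb; exact hb)

lemma gen_Gy : genH gySet true = Gy := by
  refine genH_eq gySet true (genx_true gySet) (geny_true gySet ?_ ?_ ?_ ?_)
  · intro s h; exact absurd (h true (by simp)) (by simp)
  · intro s h1 h
    exact h1 (by intro b hb; rcases List.mem_cons.1 hb with rfl | hb; · rfl
                 · exact h b (by simp [hb]))
  · intro h2; exact h2 (by intro b hb; simp at hb)
  · intro h2; exact h2 (by intro b hb; simp at hb; exact hb)

/-! ### Fixed points -/

/-- The subgroup of `M` fixing the point `p`. -/
def fixSub (p : Seq) : Subgroup M where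
  carrier := {g : M | unop g p = p}
  one_mem' := rfl
  mul_mem' := by
    intro a b ha hb
    show unop (a * b) p = p
    rw [unop_mul]
    show unop b (unop a p) = p
    rw [ha, hb]
  inv_mem' := by
    intro a ha
    show unop a⁻¹ p = p
    rw [unop_inv]
    show (unop a)⁻¹ p = p
    rw [Equiv.Perm.inv_eq_iff_eq]
    exact ha.symm

lemma mem_fixSub {p : Seq} {g : M} : g ∈ fixSub p ↔ unop g p = p := Iff.rfl

lemma LMdef_le_fixSub (A : Set (List Bool)) (c : Bool) {p : Seq} (hp : p 0 = !c) :
    LMdef A [c] ≤ fixSub p := by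
  rw [LMdef]
  refine (Subgroup.closure_le _).2 ?_
  have key : ∀ (t : List Bool) (f : Equiv.Perm Seq), [c] <+: t →
      op (localize t f) ∈ fixSub p := by
    rintro t f ⟨t₂, rfl⟩
    rw [mem_fixSub]
    show localize ([c] ++ t₂) f p = p
    refine localize_not_prefix _ _ ?_
    intro hc
    have := hasPrefix_cons_head hc
    rw [hp] at this
    cases c <;> simp at this
  rintro g (⟨t, ht, rfl⟩ | ⟨t, ⟨_, ht⟩, rfl⟩)
  · exact key t xPerm ht
  · exact key t yPerm ht

lemma LMdef_fix (A : Set (List Bool)) (c : Bool) {p : Seq} (hp : p 0 = !c) :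
    ∀ g ∈ LMdef A [c], unop g p = p :=
  fun _ hg => LMdef_le_fixSub A c hp hg

/-- The all-zero sequence. -/
def zseq : Seq := fun _ => false
/-- `10^ω`. -/
def pt1 : Seq := bcons true zseq
/-- `010^ω`. -/
def pt2 : Seq := bcons false pt1
/-- `1010^ω`. -/
def qt2 : Seq := bcons true pt2

lemma xPerm_bit0 {σ : Seq} (h : σ 0 = true) :
    xPerm σ = bcons true (bcons true (dropN 1 σ)) := by
  conv_lhs => rw [← bcons_eta σ, h]
  exact xPerm_t _

lemma xPow_bits (σ : Seq) (h : σ 0 = true) :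
    ∀ k : ℕ, 0 < k → ((xPerm ^ k) σ) 0 = true ∧ ((xPerm ^ k) σ) 1 = true := by
  intro k
  induction k with
  | zero => omega
  | succ n IH =>
    intro _
    rw [pow_succ', Equiv.Perm.mul_apply]
    rcases Nat.eq_zero_or_pos n with rfl | hn
    · simp only [pow_zero, Equiv.Perm.one_apply]
      rw [xPerm_bit0 h]
      simp
    · have h0 := (IH hn).1
      rw [xPerm_bit0 h0]
      simp

lemma xPow_ne_pt1 (k : ℕ) (hk : 0 < k) : (xPerm ^ k) pt1 ≠ pt1 := by
  intro h
  have h1 := (xPow_bits pt1 rfl k hk).2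
  rw [h] at h1
  simp [pt1, zseq] at h1

lemma xPow_pt2_bit0 (k : ℕ) (hk : 0 < k) : ((xPerm ^ k) pt2) 0 = true := by
  induction k with
  | zero => omega
  | succ n IH =>
    rw [pow_succ', Equiv.Perm.mul_apply]
    rcases Nat.eq_zero_or_pos n with rfl | hn
    · simp only [pow_zero, Equiv.Perm.one_apply]
      show (xPerm (bcons false (bcons true zseq))) 0 = true
      rw [xPerm_ft]
      simp
    · rw [xPerm_bit0 (IH hn)]
      simp

lemma xPow_ne_pt2 (k : ℕ) (hk : 0 < k) : (xPerm ^ k) pt2 ≠ pt2 := by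
  intro h
  have h1 := xPow_pt2_bit0 k hk
  rw [h] at h1
  simp [pt2] at h1

lemma px_false_moves_pt2 : unop (px [false]) pt2 ≠ pt2 := by
  show localize [false] xPerm pt2 ≠ pt2
  show localize [false] xPerm (bcons false pt1) ≠ pt2
  rw [localize_bcons_eq, show xPerm pt1 = bcons true (bcons true zseq) from xPerm_t zseq]
  intro h
  have := congrFun h 2
  simp [pt2, pt1, zseq] at this

lemma px_true_moves_qt2 : unop (px [true]) qt2 ≠ qt2 := by
  show localize [true] xPerm (bcons true pt2) ≠ qt2
  rw [localize_bcons_eq, show xPerm pt2 = bcons true (bcons false zseq) from xPerm_ft zseq]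
  intro h
  have := congrFun h 1
  simp [qt2, pt2, pt1] at this

lemma unop_conj (z g : M) (p : Seq) :
    unop (z * g * z⁻¹) p = unop z⁻¹ (unop g (unop z p)) := rfl

lemma conj_fix_pt2 (A : Set (List Bool)) :
    ∀ g ∈ LMdef A [false], unop (px [] * g * (px [])⁻¹) pt2 = pt2 := by
  intro g hg
  rw [unop_conj]
  have h1 : unop (px []) pt2 = xPerm pt2 := by rw [px_nil]; rfl
  have h2 : xPerm pt2 = bcons true (bcons false zseq) := xPerm_ft zseq
  have h3 : unop g (xPerm pt2) = xPerm pt2 := by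
    refine LMdef_fix A false ?_ g hg
    rw [h2]; rfl
  rw [h1, h3]
  have : unop (px [])⁻¹ = xPerm⁻¹ := by rw [px_nil]; rfl
  rw [this]
  exact Equiv.symm_apply_apply _ _

lemma conj_fix_qt2 (A : Set (List Bool)) :
    ∀ g ∈ LMdef A [true], unop ((px [])⁻¹ * g * ((px [])⁻¹)⁻¹) qt2 = qt2 := by
  intro g hg
  rw [unop_conj]
  have hx : xPerm (bcons false (bcons true (bcons true zseq))) = qt2 := by
    rw [xPerm_ft]
    show _ = bcons true (bcons false (bcons true zseq))
    rfl
  have h1 : unop (px [])⁻¹ qt2 = bcons false (bcons true (bcons true zseq)) := by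
    rw [px_nil]
    show xPerm⁻¹ qt2 = _
    rw [← hx]
    exact Equiv.symm_apply_apply _ _
  have h2 : unop g (bcons false (bcons true (bcons true zseq)))
      = bcons false (bcons true (bcons true zseq)) := by
    refine LMdef_fix A true ?_ g hg
    rfl
  have h3 : unop ((px [])⁻¹)⁻¹ = xPerm := by simp [px_nil]
  rw [h1, h2, h3, hx]

/-! ### Properness of the conjugate subgroup -/

lemma conj_lt_generic (Bs : Subgroup M) (z : M)
    (hmap : ∀ g ∈ Bs, z * g * z⁻¹ ∈ Bs)
    (q : Seq) (hq : ∀ g ∈ Bs, unop (z * g * z⁻¹) q = q)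
    (b₀ : M) (hb₀ : b₀ ∈ Bs) (hm : unop b₀ q ≠ q) :
    conjSubgroup z Bs < Bs := by
  have hle : conjSubgroup z Bs ≤ Bs := by
    intro g hg
    rcases Subgroup.mem_map.1 hg with ⟨a, ha, rfl⟩
    exact hmap a ha
  refine lt_of_le_of_ne hle fun he => ?_
  have : b₀ ∈ conjSubgroup z Bs := by rw [he]; exact hb₀
  rcases Subgroup.mem_map.1 this with ⟨a, ha, rfl⟩
  exact hm (hq a ha)

end Aux4
section Aux5

open MulOpposite Subgroup HNNExtension

variable {B' : Type*} [Group B'] (φ : B' →* B') (hinj : Function.Injective φ)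

lemma asc_key (b : B') :
    ((ascEquiv φ hinj ⟨φ b, ⟨b, rfl⟩⟩ : (⊤ : Subgroup B')) : B') = b := by
  have h1 : (⟨φ b, ⟨b, rfl⟩⟩ : φ.range) = MonoidHom.ofInjective hinj b :=
    Subtype.ext (by rw [MonoidHom.ofInjective_apply])
  rw [ascEquiv, MulEquiv.trans_apply, h1, MulEquiv.symm_apply_apply]
  rfl

lemma asc_rel (b : B') :
    (HNNExtension.t : AscHNN φ hinj)⁻¹ * of b * HNNExtension.t = of (φ b) := by
  have h := HNNExtension.equiv_eq_conj (G := B') (A := φ.range) (B := (⊤ : Subgroup B'))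
    (φ := ascEquiv φ hinj) ⟨φ b, ⟨b, rfl⟩⟩
  rw [asc_key] at h
  rw [h]; group

lemma asc_push (k : ℕ) (b : B') :
    ((HNNExtension.t : AscHNN φ hinj) ^ k)⁻¹ * of b * HNNExtension.t ^ k
      = of ((⇑φ)^[k] b) := by
  induction k with
  | zero => simp
  | succ n IH =>
    have e : (HNNExtension.t : AscHNN φ hinj) ^ (n+1) = HNNExtension.t ^ n * HNNExtension.t :=
      pow_succ _ _
    rw [e, Function.iterate_succ_apply', ← asc_rel φ hinj ((⇑φ)^[n] b), ← IH]
    group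

lemma asc_nf (g : AscHNN φ hinj) :
    ∃ (m n : ℕ) (b : B'),
      g = HNNExtension.t ^ m * of b * (HNNExtension.t ^ n)⁻¹ := by
  induction g using HNNExtension.induction_on with
  | of g => exact ⟨0, 0, g, by simp⟩
  | t => exact ⟨1, 0, 1, by simp⟩
  | inv g hg =>
    obtain ⟨m, n, b, rfl⟩ := hg
    exact ⟨n, m, b⁻¹, by rw [map_inv]; group⟩
  | mul g g' hg hg' =>
    obtain ⟨m, n, b, rfl⟩ := hg
    obtain ⟨m', n', b', rfl⟩ := hg'
    rcases le_total n m' with h | h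
    · refine ⟨m + (m' - n), n', (⇑φ)^[m' - n] b * b', ?_⟩
      have e1 : (of b : AscHNN φ hinj) * HNNExtension.t ^ (m' - n)
          = HNNExtension.t ^ (m' - n) * of ((⇑φ)^[m' - n] b) := by
        rw [← asc_push]; group
      have e2 : (HNNExtension.t : AscHNN φ hinj) ^ m'
          = HNNExtension.t ^ n * HNNExtension.t ^ (m' - n) := by
        rw [← pow_add]; congr 1; omega
      rw [map_mul, e2, pow_add]
      calc HNNExtension.t ^ m * of b * (HNNExtension.t ^ n)⁻¹ *
            (HNNExtension.t ^ n * HNNExtension.t ^ (m' - n) * of b' * (HNNExtension.t ^ n')⁻¹)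
          = HNNExtension.t ^ m * (of b * HNNExtension.t ^ (m' - n)) * of b' *
            (HNNExtension.t ^ n')⁻¹ := by group
        _ = HNNExtension.t ^ m * (HNNExtension.t ^ (m' - n) * of ((⇑φ)^[m' - n] b)) * of b' *
            (HNNExtension.t ^ n')⁻¹ := by rw [e1]
        _ = HNNExtension.t ^ m * HNNExtension.t ^ (m' - n) * (of ((⇑φ)^[m' - n] b) * of b') *
            (HNNExtension.t ^ n')⁻¹ := by group
        _ = _ := by rw [← map_mul]
    · refine ⟨m, n' + (n - m'), b * (⇑φ)^[n - m'] b', ?_⟩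
      have e1 : ((HNNExtension.t : AscHNN φ hinj) ^ (n - m'))⁻¹ * of b'
          = of ((⇑φ)^[n - m'] b') * (HNNExtension.t ^ (n - m'))⁻¹ := by
        rw [← asc_push φ hinj (n - m') b']; group
      have e2 : (HNNExtension.t : AscHNN φ hinj) ^ n
          = HNNExtension.t ^ m' * HNNExtension.t ^ (n - m') := by
        rw [← pow_add]; congr 1; omega
      rw [map_mul, e2, pow_add]
      calc HNNExtension.t ^ m * of b * (HNNExtension.t ^ m' * HNNExtension.t ^ (n - m'))⁻¹ *
            (HNNExtension.t ^ m' * of b' * (HNNExtension.t ^ n')⁻¹)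
          = HNNExtension.t ^ m * of b * ((HNNExtension.t ^ (n - m'))⁻¹ * of b') *
            (HNNExtension.t ^ n')⁻¹ := by group
        _ = HNNExtension.t ^ m * of b * (of ((⇑φ)^[n - m'] b') * (HNNExtension.t ^ (n - m'))⁻¹) *
            (HNNExtension.t ^ n')⁻¹ := by rw [e1]
        _ = HNNExtension.t ^ m * (of b * of ((⇑φ)^[n - m'] b')) *
            (HNNExtension.t ^ n' * HNNExtension.t ^ (n - m'))⁻¹ := by group
        _ = _ := by rw [← map_mul]

end Aux5
section Aux6

open MulOpposite Subgroup HNNExtension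

lemma hnn_generic (Gr Bs : Subgroup M) (hBG : Bs ≤ Gr) (ζ : M) (hζG : ζ ∈ Gr)
    (hgen : Subgroup.closure ((Bs : Set M) ∪ {ζ}) = Gr)
    (p : Seq) (hfix : ∀ g ∈ Bs, unop g p = p)
    (hmove : ∀ k : ℕ, 0 < k → unop (ζ ^ k) p ≠ p)
    (φ : ↥Bs →* ↥Bs) (hspec : ∀ b : ↥Bs, ((φ b : ↥Bs) : M) = ζ⁻¹ * ↑b * ζ)
    (hinj : Function.Injective φ) :
    ∃ Φ : AscHNN φ hinj ≃* ↥Gr,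
      (∀ b : ↥Bs, ((Φ (HNNExtension.of b) : ↥Gr) : M) = ↑b) ∧
        ((Φ HNNExtension.t : ↥Gr) : M) = ζ := by
  set ι : ↥Bs →* ↥Gr := Subgroup.inclusion hBG with hι
  have hιcoe : ∀ b : ↥Bs, ((ι b : ↥Gr) : M) = ↑b := fun b => rfl
  set ζG : ↥Gr := ⟨ζ, hζG⟩ with hζGdef
  have hx : ∀ a : φ.range, ζG * ι ↑a = ι ↑(ascEquiv φ hinj a) * ζG := by
    rintro ⟨a, b, rfl⟩
    rw [asc_key]
    refine Subtype.ext ?_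
    show ζ * ((φ b : ↥Bs) : M) = (↑b : M) * ζ
    rw [hspec b]
    group
  set Ψ : AscHNN φ hinj →* ↥Gr := HNNExtension.lift ι ζG hx with hΨ
  have hΨof : ∀ b : ↥Bs, Ψ (HNNExtension.of b) = ι b := fun b => HNNExtension.lift_of ι ζG hx b
  have hΨt : Ψ HNNExtension.t = ζG := HNNExtension.lift_t ι ζG hx
  have hker : ∀ g : AscHNN φ hinj, Ψ g = 1 → g = 1 := by
    intro g hg
    obtain ⟨m, n, b, rfl⟩ := asc_nf φ hinj g
    have hval : ζ ^ m * (↑b : M) * (ζ ^ n)⁻¹ = 1 := by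
      have h1 : Ψ (HNNExtension.t ^ m * HNNExtension.of b * (HNNExtension.t ^ n)⁻¹)
          = ζG ^ m * ι b * (ζG ^ n)⁻¹ := by
        rw [map_mul, map_mul, map_inv, map_pow, map_pow, hΨof, hΨt]
      rw [hg] at h1
      have h2 := congrArg (fun u : ↥Gr => (u : M)) h1
      simpa [hζGdef, hιcoe] using h2.symm
    rcases lt_trichotomy m n with hmn | rfl | hmn
    · exfalso
      have e2 : ζ ^ n = ζ ^ m * ζ ^ (n - m) := by rw [← pow_add]; congr 1; omega
      rw [e2] at hval
      have h3 : ζ ^ m * (↑b : M) = ζ ^ m * ζ ^ (n - m) := mul_inv_eq_one.mp hval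
      have hb : (↑b : M) = ζ ^ (n - m) := mul_left_cancel h3
      refine hmove (n - m) (by omega) ?_
      rw [← hb]
      exact hfix ↑b b.2
    · have h3 : ζ ^ m * (↑b : M) = ζ ^ m := mul_inv_eq_one.mp hval
      have hb : (↑b : M) = 1 := mul_eq_left.mp h3
      have hb1 : b = 1 := Subtype.ext hb
      rw [hb1, map_one, mul_one, mul_inv_cancel]
    · exfalso
      have e2 : ζ ^ m = ζ ^ n * ζ ^ (m - n) := by rw [← pow_add]; congr 1; omega
      rw [e2] at hval
      have h3 : ζ ^ n * ζ ^ (m - n) * (↑b : M) = ζ ^ n := mul_inv_eq_one.mp hval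
      have h4 : ζ ^ n * (ζ ^ (m - n) * (↑b : M)) = ζ ^ n * 1 := by
        rw [mul_one, ← mul_assoc]; exact h3
      have hb : ζ ^ (m - n) * (↑b : M) = 1 := mul_left_cancel h4
      have h5 : (↑b : M) = (ζ ^ (m - n))⁻¹ := eq_inv_of_mul_eq_one_right hb
      have hb' : ((b⁻¹ : ↥Bs) : M) = ζ ^ (m - n) := by
        simp [h5]
      refine hmove (m - n) (by omega) ?_
      rw [← hb']
      exact hfix _ (b⁻¹).2
  have hsurj : Function.Surjective Ψ := by
    intro h
    have hmem : (h : M) ∈ Subgroup.closure ((Bs : Set M) ∪ {ζ}) := by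
      rw [hgen]; exact h.2
    have hs : ∃ g : AscHNN φ hinj, ((Ψ g : ↥Gr) : M) = (h : M) := by
      refine Subgroup.closure_induction
        (p := fun m _ => ∃ g : AscHNN φ hinj, ((Ψ g : ↥Gr) : M) = m) ?_ ?_ ?_ ?_ hmem
      · rintro x (hb | hζ)
        · exact ⟨HNNExtension.of ⟨x, hb⟩, by rw [hΨof]; rfl⟩
        · refine ⟨HNNExtension.t, ?_⟩
          rw [hΨt]
          rw [Set.mem_singleton_iff] at hζ
          rw [hζ]
      · exact ⟨1, by simp⟩
      · rintro u v - - ⟨g1, hg1⟩ ⟨g2, hg2⟩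
        exact ⟨g1 * g2, by rw [map_mul]; push_cast; rw [hg1, hg2]⟩
      · rintro u - ⟨g1, hg1⟩
        exact ⟨g1⁻¹, by rw [map_inv]; push_cast; rw [hg1]⟩
    obtain ⟨g, hgEq⟩ := hs
    exact ⟨g, Subtype.ext hgEq⟩
  refine ⟨MulEquiv.ofBijective Ψ ⟨(injective_iff_map_eq_one Ψ).2 hker, hsurj⟩, ?_, ?_⟩
  · intro b
    show ((Ψ (HNNExtension.of b) : ↥Gr) : M) = ↑b
    rw [hΨof]
    rfl
  · show ((Ψ HNNExtension.t : ↥Gr) : M) = ζ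
    rw [hΨt]

end Aux6
section Aux7

open MulOpposite Subgroup

lemma closure_union_inv (S : Set M) (z : M) :
    Subgroup.closure (S ∪ {z⁻¹}) = Subgroup.closure (S ∪ {z}) := by
  refine le_antisymm ((Subgroup.closure_le _).2 ?_) ((Subgroup.closure_le _).2 ?_)
  · rintro g (hg | hz)
    · exact Subgroup.subset_closure (Or.inl hg)
    · rw [Set.mem_singleton_iff] at hz
      rw [hz]
      exact inv_mem (Subgroup.subset_closure (Or.inr rfl))
  · rintro g (hg | hz)
    · exact Subgroup.subset_closure (Or.inl hg)
    · rw [Set.mem_singleton_iff] at hz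
      rw [hz]
      have h1 : z⁻¹ ∈ Subgroup.closure (S ∪ {z⁻¹}) :=
        Subgroup.subset_closure (Or.inr rfl)
      have h2 := inv_mem h1
      rwa [inv_inv] at h2

lemma conj_mem_of_gen (Bs : Subgroup M) (S : Set M) (hS : Bs = Subgroup.closure S) (z : M)
    (h : ∀ g ∈ S, z * g * z⁻¹ ∈ Bs) : ∀ g ∈ Bs, z * g * z⁻¹ ∈ Bs := by
  intro g hg
  rw [hS] at hg
  refine Subgroup.closure_induction (p := fun g _ => z * g * z⁻¹ ∈ Bs) h ?_ ?_ ?_ hg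
  · simpa using one_mem Bs
  · intro a b _ _ ha hb
    have e : z * (a * b) * z⁻¹ = (z * a * z⁻¹) * (z * b * z⁻¹) := by group
    rw [e]; exact mul_mem ha hb
  · intro a _ ha
    have e : z * a⁻¹ * z⁻¹ = (z * a * z⁻¹)⁻¹ := by group
    rw [e]; exact inv_mem ha

lemma conj_Bs_false (A : Set (List Bool))
    (hA : ∀ s, (false :: s) ∈ A → (false :: false :: s) ∈ A) :
    ∀ g ∈ LMdef A [false], px [] * g * (px [])⁻¹ ∈ LMdef A [false] := by
  refine conj_mem_of_gen _ _ rfl _ ?_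
  rintro g (⟨t, ht, rfl⟩ | ⟨t, ⟨htA, ht⟩, rfl⟩)
  · obtain ⟨t₂, rfl⟩ := ht
    rw [List.singleton_append, px_eq (false :: t₂), ← relB1 xPerm t₂]
    exact px_mem_def A ⟨false :: t₂, rfl⟩
  · obtain ⟨t₂, rfl⟩ := ht
    rw [List.singleton_append, py_eq (false :: t₂), ← relB1 yPerm t₂]
    exact py_mem_def (hA t₂ htA) ⟨false :: t₂, rfl⟩

lemma conj_Bs_true (A : Set (List Bool))
    (hA : ∀ s, (true :: s) ∈ A → (true :: true :: s) ∈ A) :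
    ∀ g ∈ LMdef A [true], (px [])⁻¹ * g * ((px [])⁻¹)⁻¹ ∈ LMdef A [true] := by
  refine conj_mem_of_gen _ _ rfl _ ?_
  rintro g (⟨t, ht, rfl⟩ | ⟨t, ⟨htA, ht⟩, rfl⟩)
  · obtain ⟨t₂, rfl⟩ := ht
    rw [inv_inv, List.singleton_append, px_eq (true :: t₂), ← relA3 xPerm t₂]
    exact px_mem_def A ⟨true :: t₂, rfl⟩
  · obtain ⟨t₂, rfl⟩ := ht
    rw [inv_inv, List.singleton_append, py_eq (true :: t₂), ← relA3 yPerm t₂]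
    exact py_mem_def (hA t₂ htA) ⟨true :: t₂, rfl⟩

lemma unop_px_pow (k : ℕ) : unop (px [] ^ k) = xPerm ^ k := by
  rw [px_nil]
  simp

lemma hmove_inv_pt1 : ∀ k : ℕ, 0 < k → unop ((px [])⁻¹ ^ k) pt1 ≠ pt1 := by
  intro k hk h
  have e : unop ((px [])⁻¹ ^ k) = (xPerm ^ k)⁻¹ := by
    rw [inv_pow, unop_inv, unop_px_pow]
  rw [e] at h
  have h2 : (xPerm ^ k) pt1 = pt1 := by
    conv_lhs => rw [← h]
    simp
  exact xPow_ne_pt1 k hk h2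

lemma hmove_pos_pt2 : ∀ k : ℕ, 0 < k → unop (px [] ^ k) pt2 ≠ pt2 := by
  intro k hk h
  rw [unop_px_pow] at h
  exact xPow_ne_pt2 k hk h

lemma gSet_cff : ∀ s, (false :: s) ∈ gSet → (false :: false :: s) ∈ gSet := by
  rintro s ⟨h1, _⟩
  refine ⟨fun h => h1 fun b hb => h b (by simp [List.mem_cons] at hb ⊢; tauto), fun h => ?_⟩
  have := h false (by simp)
  exact Bool.noConfusion this

lemma ygSet_cff : ∀ s, (false :: s) ∈ ygSet → (false :: false :: s) ∈ ygSet := by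
  intro s _ h
  have := h false (by simp)
  exact Bool.noConfusion this

lemma gySet_ctt : ∀ s, (true :: s) ∈ gySet → (true :: true :: s) ∈ gySet := by
  intro s _ h
  have := h true (by simp)
  exact Bool.noConfusion this

end Aux7
/-- (i) `G` is a strictly ascending HNN extension of `G(0)` with stable element `x_∅⁻¹`;
(ii) `G_y` is a strictly ascending HNN extension of `G_y(1)` with stable element `x_∅`;
(iii) `yG` is a strictly ascending HNN extension of `yG(0)` with stable element `x_∅⁻¹`.
In each case the base is generated together with `x_∅` to give the whole group, the
conjugate of the base by the stable element is a proper subgroup of the base, and there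
is an isomorphism with the abstract ascending HNN extension fixing the base pointwise
and sending `t` to the stable element. -/
theorem more_F_like_hnn_decompositions :
    -- (i) G over G(0), stable element x_∅⁻¹
    (Subgroup.closure ((LMdef gSet [false] : Set M) ∪ {px []}) = G ∧
      conjSubgroup (px []) (LMdef gSet [false]) < LMdef gSet [false] ∧
      ∀ (φ : ↥(LMdef gSet [false]) →* ↥(LMdef gSet [false]))
        (_ : ∀ b : ↥(LMdef gSet [false]), (φ b : M) = px [] * (b : M) * (px [])⁻¹)
        (hinj : Function.Injective φ),
        ∃ Φ : AscHNN φ hinj ≃* ↥G,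
          (∀ b : ↥(LMdef gSet [false]), (Φ (HNNExtension.of b) : M) = (b : M)) ∧
          (Φ HNNExtension.t : M) = (px [])⁻¹) ∧
    -- (ii) G_y over G_y(1), stable element x_∅
    (Subgroup.closure ((LMdef gySet [true] : Set M) ∪ {px []}) = Gy ∧
      conjSubgroup (px [])⁻¹ (LMdef gySet [true]) < LMdef gySet [true] ∧
      ∀ (φ : ↥(LMdef gySet [true]) →* ↥(LMdef gySet [true]))
        (_ : ∀ b : ↥(LMdef gySet [true]), (φ b : M) = (px [])⁻¹ * (b : M) * px [])
        (hinj : Function.Injective φ),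
        ∃ Φ : AscHNN φ hinj ≃* ↥Gy,
          (∀ b : ↥(LMdef gySet [true]), (Φ (HNNExtension.of b) : M) = (b : M)) ∧
          (Φ HNNExtension.t : M) = px []) ∧
    -- (iii) yG over yG(0), stable element x_∅⁻¹
    (Subgroup.closure ((LMdef ygSet [false] : Set M) ∪ {px []}) = yG ∧
      conjSubgroup (px []) (LMdef ygSet [false]) < LMdef ygSet [false] ∧
      ∀ (φ : ↥(LMdef ygSet [false]) →* ↥(LMdef ygSet [false]))
        (_ : ∀ b : ↥(LMdef ygSet [false]), (φ b : M) = px [] * (b : M) * (px [])⁻¹)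
        (hinj : Function.Injective φ),
        ∃ Φ : AscHNN φ hinj ≃* ↥yG,
          (∀ b : ↥(LMdef ygSet [false]), (Φ (HNNExtension.of b) : M) = (b : M)) ∧
          (Φ HNNExtension.t : M) = (px [])⁻¹) := by
  refine ⟨⟨?_, ?_, ?_⟩, ⟨?_, ?_, ?_⟩, ⟨?_, ?_, ?_⟩⟩
  · exact gen_G
  · exact conj_lt_generic (LMdef gSet [false]) (px []) (conj_Bs_false gSet gSet_cff) pt2
      (conj_fix_pt2 gSet) (px [false]) (px_mem_def gSet ⟨[], rfl⟩) px_false_moves_pt2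
  · intro φ hφ hinj
    have hgen' : Subgroup.closure ((LMdef gSet [false] : Set M) ∪ {(px [])⁻¹}) = G := by
      rw [closure_union_inv]; exact gen_G
    exact hnn_generic G (LMdef gSet [false]) (LMdef_le_LM gSet [false]) (px [])⁻¹
      (inv_mem (px_mem gSet [])) hgen' pt1 (LMdef_fix gSet false rfl) hmove_inv_pt1
      φ (fun b => by rw [hφ b, inv_inv]) hinj
  · exact gen_Gy
  · exact conj_lt_generic (LMdef gySet [true]) (px [])⁻¹ (conj_Bs_true gySet gySet_ctt) qt2
      (conj_fix_qt2 gySet) (px [true]) (px_mem_def gySet ⟨[], rfl⟩) px_true_moves_qt2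
  · intro φ hφ hinj
    exact hnn_generic Gy (LMdef gySet [true]) (LMdef_le_LM gySet [true]) (px [])
      (px_mem gySet []) gen_Gy pt2 (LMdef_fix gySet true rfl) hmove_pos_pt2
      φ (fun b => hφ b) hinj
  · exact gen_yG
  · exact conj_lt_generic (LMdef ygSet [false]) (px []) (conj_Bs_false ygSet ygSet_cff) pt2
      (conj_fix_pt2 ygSet) (px [false]) (px_mem_def ygSet ⟨[], rfl⟩) px_false_moves_pt2
  · intro φ hφ hinj
    have hgen' : Subgroup.closure ((LMdef ygSet [false] : Set M) ∪ {(px [])⁻¹}) = yG := by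
      rw [closure_union_inv]; exact gen_yG
    exact hnn_generic yG (LMdef ygSet [false]) (LMdef_le_LM ygSet [false]) (px [])⁻¹
      (inv_mem (px_mem ygSet [])) hgen' pt1 (LMdef_fix ygSet false rfl) hmove_inv_pt1
      φ (fun b => by rw [hφ b, inv_inv]) hinj

end LodhaMoore
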